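/- If α is a root of h(t) = t^3 + 4t^2 + 3t − 1, then the number field Q(α) is a Galois (cyclic) cubic extension of Q. -/

import Mathlib

open IntermediateField Polynomial

private noncomputable def P : ℚ[X] := X ^ 3 + 4 * X ^ 2 + 3 * X - 1

private lemma P_monic : P.Monic := by unfold P; monicity!

private lemma P_natDegree : P.natDegree = 3 := by unfold P; compute_degree!

private lemma P_irr : Irreducible P := by
  have hZ : (X ^ 3 + 4 * X ^ 2 + 3 * X - 1 : ℤ[X]).Monic := by monicity!
  have hmap : (X ^ 3 + 4 * X ^ 2 + 3 * X - 1 : ℤ[X]).map (Int.castRingHom (ZMod 2))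
      = X ^ 3 + X + 1 := by
    have h2 : (2 : (ZMod 2)[X]) = 0 := by
      rw [show (2 : (ZMod 2)[X]) = C 2 from (map_ofNat C 2).symm,
        show (2 : ZMod 2) = 0 from rfl, map_zero]
    simp only [Polynomial.map_add, Polynomial.map_sub, Polynomial.map_pow, Polynomial.map_mul,
      Polynomial.map_ofNat, Polynomial.map_one, Polynomial.map_X]
    linear_combination (2 * X ^ 2 + X - 1) * h2
  have hirr2 : Irreducible (X ^ 3 + X + 1 : (ZMod 2)[X]) := by
    have hdeg : (X ^ 3 + X + 1 : (ZMod 2)[X]).natDegree = 3 := by compute_degree!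
    rw [Polynomial.irreducible_iff_roots_eq_zero_of_degree_le_three (by omega) (by omega)]
    rw [Multiset.eq_zero_iff_forall_notMem]
    intro x hx
    rw [mem_roots, IsRoot.def] at hx
    · simp only [eval_add, eval_pow, eval_X, eval_one] at hx
      revert hx; revert x; decide
    · intro h; rw [h] at hdeg; simp at hdeg
  have hirrZ : Irreducible (X ^ 3 + 4 * X ^ 2 + 3 * X - 1 : ℤ[X]) := by
    apply hZ.irreducible_of_irreducible_map (Int.castRingHom (ZMod 2))
    rw [hmap]; exact hirr2
  have := (IsPrimitive.Int.irreducible_iff_irreducible_map_cast hZ.isPrimitive).mp hirrZ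
  have hmapQ : (X ^ 3 + 4 * X ^ 2 + 3 * X - 1 : ℤ[X]).map (Int.castRingHom ℚ) = P := by
    simp [P, Polynomial.map_add, Polynomial.map_sub, Polynomial.map_pow, Polynomial.map_mul,
      Polynomial.map_ofNat]
  rwa [hmapQ] at this

/-- If `α` is a root of `h(t) = t^3 + 4t^2 + 3t - 1`, then `ℚ(α)` is a Galois cubic
extension of `ℚ`, with cyclic Galois group (of order 3). -/
theorem stmt_5 (α : ℂ) (hα : α ^ 3 + 4 * α ^ 2 + 3 * α - 1 = 0) :
    IsGalois ℚ ℚ⟮α⟯ ∧ Module.finrank ℚ ℚ⟮α⟯ = 3 ∧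
    IsCyclic (ℚ⟮α⟯ ≃ₐ[ℚ] ℚ⟮α⟯) := by
  have haev : Polynomial.aeval α P = 0 := by
    simp only [P, map_add, map_sub, map_mul, map_pow, map_ofNat, map_one, aeval_X]
    linear_combination hα
  have hint : IsIntegral ℚ α := ⟨P, P_monic, haev⟩
  have hmin : minpoly ℚ α = P := (minpoly.eq_of_irreducible_of_monic P_irr haev P_monic).symm
  haveI hFD : FiniteDimensional ℚ ℚ⟮α⟯ := IntermediateField.adjoin.finiteDimensional hint
  have hfin : Module.finrank ℚ ℚ⟮α⟯ = 3 := by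
    rw [IntermediateField.adjoin.finrank hint, hmin, P_natDegree]
  set K := ℚ⟮α⟯
  set A : K := IntermediateField.AdjoinSimple.gen ℚ α with hAdef
  have hA : A ^ 3 + 4 * A ^ 2 + 3 * A - 1 = 0 := by
    apply Subtype.coe_injective
    exact hα
  set B : K := A ^ 2 + 2 * A - 2 with hBdef
  set Cc : K := B ^ 2 + 2 * B - 2 with hCdef
  have h1 : A + B + Cc = -4 := by rw [hBdef, hCdef]; linear_combination A * hA
  have h2 : A * B + A * Cc + B * Cc = 3 := by
    rw [hBdef, hCdef]; linear_combination (A ^ 3 + 3 * A ^ 2 - 3 * A - 1) * hA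
  have h3 : A * B * Cc = 1 := by
    rw [hBdef, hCdef]; linear_combination (A ^ 4 + 2 * A ^ 3 - 3 * A ^ 2 - A + 1) * hA
  have hfact : P.map (algebraMap ℚ K) = (X - C A) * (X - C B) * (X - C Cc) := by
    have : (X - C A) * (X - C B) * (X - C Cc)
        = X ^ 3 - C (A + B + Cc) * X ^ 2 + C (A * B + A * Cc + B * Cc) * X
          - C (A * B * Cc) := by
      simp only [map_add, map_mul]
      ring
    rw [this, h1, h2, h3]
    simp only [P, Polynomial.map_add, Polynomial.map_sub, Polynomial.map_pow,
      Polynomial.map_mul, Polynomial.map_ofNat, Polynomial.map_one, Polynomial.map_X,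
      map_ofNat, map_one, map_neg]
    ring
  haveI sp : P.IsSplittingField ℚ K := by
    constructor
    · rw [hfact]
      exact Polynomial.Splits.mul
        (Polynomial.Splits.mul (Polynomial.Splits.X_sub_C _) (Polynomial.Splits.X_sub_C _))
        (Polynomial.Splits.X_sub_C _)
    · have hAmem : A ∈ P.rootSet K := by
        rw [Polynomial.mem_rootSet]
        refine ⟨P_monic.ne_zero, ?_⟩
        simp only [P, map_add, map_sub, map_mul, map_pow, map_ofNat, map_one, aeval_X]
        linear_combination hA
      have htop : Algebra.adjoin ℚ {A} = ⊤ := by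
        have htop := (IntermediateField.adjoin.powerBasis hint).adjoin_gen_eq_top
        rwa [IntermediateField.adjoin.powerBasis_gen] at htop
      refine le_antisymm le_top ?_
      rw [← htop]
      exact Algebra.adjoin_mono (Set.singleton_subset_iff.mpr hAmem)
  haveI : IsGalois ℚ K := IsGalois.of_separable_splitting_field P_irr.separable
  refine ⟨inferInstance, hfin, ?_⟩
  haveI : Fact (Nat.Prime 3) := ⟨by norm_num⟩
  have hcard : Nat.card (K ≃ₐ[ℚ] K) = 3 := by
    rw [IsGalois.card_aut_eq_finrank, hfin]
  exact isCyclic_of_prime_card hcard
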